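/- Let G be a group and let 𝒜 be a finite nonempty subset of G. If the subsemigroup ⟨𝒜⟩ generated by 𝒜 is a group, then every element of ⟨𝒜⟩ is represented by some full-image word over 𝒜. -/

import Mathlib

/-- A word (nonempty list) `l` over the alphabet `𝒜` is *full-image* if every element
of `𝒜` occurs in `l`.  It represents the product of its letters. -/
def IsFullImageWord {G : Type*} [Group G] (𝒜 : Finset G) (l : List G) : Prop :=
  l ≠ [] ∧ (∀ x ∈ l, x ∈ 𝒜) ∧ (∀ a ∈ 𝒜, a ∈ l)

/-- A subsemigroup `S` of a group is a group if it contains the neutral element and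
is closed under inverses. -/
def Subsemigroup.IsSubgroup {G : Type*} [Group G] (S : Subsemigroup G) : Prop :=
  (1 : G) ∈ S ∧ ∀ x ∈ S, x⁻¹ ∈ S

lemma exists_word_of_mem_closure {G : Type*} [Group G] (𝒜 : Finset G) {g : G}
    (hg : g ∈ Subsemigroup.closure (𝒜 : Set G)) :
    ∃ l : List G, l ≠ [] ∧ (∀ x ∈ l, x ∈ 𝒜) ∧ l.prod = g := by
  induction hg using Subsemigroup.closure_induction with
  | mem x hx => exact ⟨[x], by simp, by simpa using hx, by simp⟩
  | mul x y hx hy ihx ihy =>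
    obtain ⟨l₁, h1ne, h1mem, h1prod⟩ := ihx
    obtain ⟨l₂, h2ne, h2mem, h2prod⟩ := ihy
    refine ⟨l₁ ++ l₂, by simp [h1ne], ?_, by simp [h1prod, h2prod]⟩
    intro x hx
    rcases List.mem_append.mp hx with h | h
    · exact h1mem x h
    · exact h2mem x h

/-- If the subsemigroup generated by a finite nonempty subset `𝒜` of a
group is a group, then every element of it is represented by a full-image word over `𝒜`. -/
theorem every_element_repr_by_full_image_word_of_closure_isSubgroup
    {G : Type*} [Group G] (𝒜 : Finset G) (h𝒜 : 𝒜.Nonempty)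
    (hgrp : (Subsemigroup.closure (𝒜 : Set G)).IsSubgroup) :
    ∀ g ∈ Subsemigroup.closure (𝒜 : Set G),
      ∃ l : List G, IsFullImageWord 𝒜 l ∧ l.prod = g := by
  intro g hg
  classical
  -- a word with product 1 containing all letters of any subset s ⊆ 𝒜
  have key : ∀ s : Finset G, s ⊆ 𝒜 →
      ∃ W : List G, (∀ x ∈ W, x ∈ 𝒜) ∧ (∀ a ∈ s, a ∈ W) ∧ W.prod = 1 := by
    intro s
    induction s using Finset.induction with
    | empty => intro _; exact ⟨[], by simp, by simp, by simp⟩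
    | insert _ _ hnotmem ih =>
      rename_i a s
      intro hsub
      have ha : a ∈ 𝒜 := hsub (Finset.mem_insert_self a s)
      have hsub' : s ⊆ 𝒜 := fun x hx => hsub (Finset.mem_insert_of_mem hx)
      obtain ⟨W, hWmem, hWall, hWprod⟩ := ih hsub'
      have hainv : a⁻¹ ∈ Subsemigroup.closure (𝒜 : Set G) :=
        hgrp.2 a (Subsemigroup.subset_closure ha)
      obtain ⟨w, _, hwmem, hwprod⟩ := exists_word_of_mem_closure 𝒜 hainv
      refine ⟨a :: w ++ W, ?_, ?_, ?_⟩
      · intro x hx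
        rcases List.mem_append.mp hx with h | h
        · rcases List.mem_cons.mp h with rfl | h
          · exact ha
          · exact hwmem x h
        · exact hWmem x h
      · intro b hb
        rcases Finset.mem_insert.mp hb with rfl | hb
        · simp
        · simp [hWall b hb]
      · simp [hwprod, hWprod]
  obtain ⟨W, hWmem, hWall, hWprod⟩ := key 𝒜 (le_refl _)
  obtain ⟨u, hune, humem, huprod⟩ := exists_word_of_mem_closure 𝒜 hg
  refine ⟨W ++ u, ⟨by simp [hune], ?_, ?_⟩, by simp [hWprod, huprod]⟩
  · intro x hx
    rcases List.mem_append.mp hx with h | h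
    · exact hWmem x h
    · exact humem x h
  · intro a ha
    exact List.mem_append.mpr (Or.inl (hWall a ha))
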